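/- Let p be a prime and let B and M be positive integers with B < p. Suppose that β^M ≡ 1 (mod p) for every integer β with 1 ≤ β ≤ B. Then every B-smooth positive integer n satisfies n^M ≡ 1 (mod p), and consequently Ψ(p, B) ≤ M. -/
import Mathlib


/-- If `p` is prime, `0 < B < p`, `0 < M`, and `β^M ≡ 1 (mod p)` for all
`1 ≤ β ≤ B`, then every `B`-smooth positive integer `n` satisfies
`n^M ≡ 1 (mod p)`, and consequently `Ψ(p, B) ≤ M`. -/
theorem smooth_pow_eq_one_and_count_le (p B M : ℕ) (hp : p.Prime)
    (hB : 0 < B) (hM : 0 < M) (hBp : B < p)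
    (h : ∀ β : ℕ, 1 ≤ β → β ≤ B → β ^ M ≡ 1 [MOD p]) :
    (∀ n : ℕ, 0 < n → (∀ q : ℕ, q.Prime → q ∣ n → q ≤ B) → n ^ M ≡ 1 [MOD p]) ∧
      Nat.card {n : ℕ | 0 < n ∧ n ≤ p ∧ ∀ q : ℕ, q.Prime → q ∣ n → q ≤ B} ≤ M := by
  have key : ∀ n : ℕ, 0 < n → (∀ q : ℕ, q.Prime → q ∣ n → q ≤ B) → n ^ M ≡ 1 [MOD p] := by
    intro n
    induction n using Nat.strong_induction_on with
    | _ n ih =>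
      intro hn hsm
      rcases eq_or_ne n 1 with rfl | hne
      · simp [Nat.ModEq.refl]
      · obtain ⟨q, hq, hqd⟩ := Nat.exists_prime_and_dvd hne
        obtain ⟨m, rfl⟩ := hqd
        have hqB : q ≤ B := hsm q hq ⟨m, rfl⟩
        have hm : 0 < m := Nat.pos_of_mul_pos_left (by rwa [mul_comm] at hn)
        have hmlt : m < q * m := by
          have : 1 < q := hq.one_lt
          calc m = 1 * m := (one_mul m).symm
            _ < q * m := (Nat.mul_lt_mul_right hm).mpr this
        have h1 : q ^ M ≡ 1 [MOD p] := h q hq.one_lt.le hqB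
        have h2 : m ^ M ≡ 1 [MOD p] := ih m hmlt hm (fun r hr hrd => hsm r hr (hrd.mul_left q))
        calc (q * m) ^ M = q ^ M * m ^ M := mul_pow q m M
          _ ≡ 1 * 1 [MOD p] := h1.mul h2
          _ = 1 := one_mul 1
  refine ⟨key, ?_⟩
  have hp1 : 0 < p := hp.pos
  haveI : Fact p.Prime := ⟨hp⟩
  -- target: M-th roots of unity in ZMod p
  set T := {x : ZMod p | x ^ M = 1} with hT
  have hTfin : T.Finite := Set.toFinite T
  have hTcard : Nat.card T ≤ M := by
    have hEq : T = ↑(Polynomial.nthRoots M (1 : ZMod p)).toFinset := by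
      ext x
      simp [hT, Polynomial.mem_nthRoots hM]
    rw [hEq, Nat.card_coe_set_eq, Set.ncard_coe_finset]
    exact le_trans (Multiset.toFinset_card_le _) (Polynomial.card_nthRoots M 1)
  set S := {n : ℕ | 0 < n ∧ n ≤ p ∧ ∀ q : ℕ, q.Prime → q ∣ n → q ≤ B} with hS
  have hlt : ∀ n ∈ S, n < p := by
    intro n hn
    obtain ⟨hn0, hnp, hsm⟩ := hn
    rcases lt_or_eq_of_le hnp with h' | rfl
    · exact h'
    · exact absurd (hsm n hp dvd_rfl) (not_le.mpr hBp)
  have hmem : ∀ n : S, ((n : ℕ) : ZMod p) ∈ T := by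
    intro n
    have h1 := key n n.2.1 n.2.2.2
    have h2 : (((n : ℕ) ^ M : ℕ) : ZMod p) = ((1 : ℕ) : ZMod p) :=
      (ZMod.natCast_eq_natCast_iff _ _ _).mpr h1
    push_cast at h2
    exact h2
  refine le_trans (Nat.card_le_card_of_injective
    (fun n : S => (⟨((n : ℕ) : ZMod p), hmem n⟩ : T)) ?_) hTcard
  rintro ⟨a, ha⟩ ⟨b, hb⟩ hab
  have hc : (a : ZMod p) = (b : ZMod p) := congrArg Subtype.val hab
  have hval : a = b := by
    have := congrArg ZMod.val hc
    rwa [ZMod.val_cast_of_lt (hlt a ha), ZMod.val_cast_of_lt (hlt b hb)] at this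
  exact Subtype.ext hval
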